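/- Fix g, h₀ > 0 and ω ∈ ℝ, let c₀ = (ω h₀)/2 + √(g h₀ + (ω² h₀²)/4), and let c₊(k) = (ω/2)·tanh(k h₀)/k + √(g·tanh(k h₀)/k + (ω²/4)·tanh²(k h₀)/k²) for k > 0. Then lim_{k→0⁺} (c₀ − c₊(k))/k² = c₂, where c₂ = (h₀²/6)·(ω h₀ + (g h₀ + (ω² h₀²)/2)/√(g h₀ + (ω² h₀²)/4)). That is, the dispersion relation admits the long wave expansion c₊(k) = c₀ − c₂ k² + o(k²) as k → 0⁺, giving the coefficients of the vorticity-modified Korteweg–de Vries equation. -/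

import Mathlib

open Real Filter Topology Set

lemma myHasDerivAt_tanh (x : ℝ) : HasDerivAt Real.tanh (1 - Real.tanh x ^ 2) x := by
  have h := ((Real.hasDerivAt_sinh x).div (Real.hasDerivAt_cosh x) (Real.cosh_pos x).ne')
  have hfun : (Real.sinh / Real.cosh) = Real.tanh := by
    funext y; rw [Pi.div_apply, Real.tanh_eq_sinh_div_cosh]
  rw [hfun] at h
  refine h.congr_deriv ?_
  have hc := (Real.cosh_pos x).ne'
  rw [Real.tanh_eq_sinh_div_cosh]
  field_simp

lemma tanh_div_self_tendsto : Tendsto (fun x : ℝ => Real.tanh x / x) (𝓝[>] 0) (𝓝 1) := by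
  have h := (myHasDerivAt_tanh 0)
  rw [hasDerivAt_iff_tendsto_slope] at h
  simp [Real.tanh_zero] at h
  have h' := h.mono_left (nhdsWithin_mono _ (fun x hx => ne_of_gt hx : Ioi (0:ℝ) ⊆ {0}ᶜ))
  refine h'.congr (fun x => ?_)
  simp [slope_def_field]

lemma cube_lemma : Tendsto (fun x : ℝ => (x - Real.tanh x) / x ^ 3) (𝓝[>] 0) (𝓝 (1/3)) := by
  apply HasDerivAt.lhopital_zero_right_on_Ioo (f' := fun x => Real.tanh x ^ 2)
    (g' := fun x => 3 * x ^ 2) (b := 1) one_pos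
  · intro x _
    have := (hasDerivAt_id x).sub (myHasDerivAt_tanh x)
    refine this.congr_deriv ?_; ring
  · intro x _
    simpa using (hasDerivAt_pow 3 x)
  · intro x hx
    have h0 := hx.1
    positivity
  · have : Tendsto (fun x : ℝ => x - Real.tanh x) (𝓝 0) (𝓝 0) := by
      have hct : Continuous Real.tanh :=
        continuous_iff_continuousAt.mpr fun x => (myHasDerivAt_tanh x).continuousAt
      have : Continuous fun x : ℝ => x - Real.tanh x := continuous_id.sub hct
      simpa using this.tendsto 0
    exact this.mono_left nhdsWithin_le_nhds
  · have : Tendsto (fun x : ℝ => x ^ 3) (𝓝 0) (𝓝 0) := by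
      simpa using (continuous_pow 3).tendsto (0:ℝ)
    exact this.mono_left nhdsWithin_le_nhds
  · have h1 : Tendsto (fun x : ℝ => (Real.tanh x / x) ^ 2 / 3) (𝓝[>] 0) (𝓝 (1/3)) := by
      simpa using ((tanh_div_self_tendsto.pow 2).div_const 3)
    refine h1.congr' ?_
    filter_upwards [self_mem_nhdsWithin] with x (hx : 0 < x)
    rw [div_pow, div_div, mul_comm]

/-- The long wave expansion `c₊(k) = c₀ - c₂k² + o(k²)` of the water wave dispersion
relation with constant vorticity `ω`, giving the coefficients of the vorticity-modified
Korteweg-de Vries equation: `lim_{k→0⁺} (c₀ - c₊(k))/k² = c₂`. -/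
theorem phase_speed_KdV_expansion
    (g h₀ ω : ℝ) (hg : 0 < g) (hh₀ : 0 < h₀)
    (c₀ c₂ : ℝ)
    (hc₀ : c₀ = ω * h₀ / 2 + Real.sqrt (g * h₀ + ω ^ 2 * h₀ ^ 2 / 4))
    (hc₂ : c₂ = h₀ ^ 2 / 6 *
      (ω * h₀ + (g * h₀ + ω ^ 2 * h₀ ^ 2 / 2) / Real.sqrt (g * h₀ + ω ^ 2 * h₀ ^ 2 / 4))) :
    Tendsto
      (fun k : ℝ => (c₀ - (ω / 2 * (tanh (k * h₀) / k)
        + Real.sqrt (g * tanh (k * h₀) / k + ω ^ 2 / 4 * tanh (k * h₀) ^ 2 / k ^ 2))) / k ^ 2)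
      (𝓝[>] 0) (𝓝 c₂) := by
  set A := g * h₀ + ω ^ 2 * h₀ ^ 2 / 4 with hA_def
  have hA : 0 < A := by positivity
  have hsA : 0 < Real.sqrt A := Real.sqrt_pos.mpr hA
  have hmul : Tendsto (fun k : ℝ => k * h₀) (𝓝[>] 0) (𝓝[>] 0) := by
    apply tendsto_nhdsWithin_of_tendsto_nhds_of_eventually_within
    · have : Tendsto (id : ℝ → ℝ) (𝓝 0) (𝓝 0) := tendsto_id
      simpa using (this.mul_const h₀).mono_left nhdsWithin_le_nhds
    · filter_upwards [self_mem_nhdsWithin] with k (hk : 0 < k)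
      exact mul_pos hk hh₀
  have ht : Tendsto (fun k : ℝ => Real.tanh (k * h₀) / k) (𝓝[>] 0) (𝓝 h₀) := by
    have h1 := (tanh_div_self_tendsto.comp hmul).mul_const h₀
    rw [one_mul] at h1
    refine h1.congr' ?_
    filter_upwards [self_mem_nhdsWithin] with k (hk : 0 < k)
    simp only [Function.comp]
    field_simp
  have hu : Tendsto (fun k : ℝ => (h₀ - Real.tanh (k * h₀) / k) / k ^ 2)
      (𝓝[>] 0) (𝓝 (h₀ ^ 3 / 3)) := by
    have h1 := (cube_lemma.comp hmul).const_mul (h₀ ^ 3)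
    have h2 : h₀ ^ 3 * (1/3) = h₀ ^ 3 / 3 := by ring
    rw [h2] at h1
    refine h1.congr' ?_
    filter_upwards [self_mem_nhdsWithin] with k (hk : 0 < k)
    simp only [Function.comp]
    field_simp
  have hB : Tendsto (fun k : ℝ => g * (Real.tanh (k * h₀) / k)
      + ω ^ 2 / 4 * (Real.tanh (k * h₀) / k) ^ 2) (𝓝[>] 0) (𝓝 A) := by
    have h1 := (ht.const_mul g).add ((ht.pow 2).const_mul (ω ^ 2 / 4))
    have h2 : g * h₀ + ω ^ 2 / 4 * h₀ ^ 2 = A := by rw [hA_def]; ring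
    rwa [h2] at h1
  have hden : Tendsto (fun k : ℝ => Real.sqrt A + Real.sqrt (g * (Real.tanh (k * h₀) / k)
      + ω ^ 2 / 4 * (Real.tanh (k * h₀) / k) ^ 2)) (𝓝[>] 0) (𝓝 (2 * Real.sqrt A)) := by
    have hs := (Real.continuous_sqrt.tendsto A).comp hB
    have h1 := (tendsto_const_nhds (x := Real.sqrt A) (f := 𝓝[>] (0:ℝ))).add hs
    have h2 : Real.sqrt A + Real.sqrt A = 2 * Real.sqrt A := by ring
    rw [h2] at h1
    exact h1
  have hG : Tendsto (fun k : ℝ =>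
      ω / 2 * ((h₀ - Real.tanh (k * h₀) / k) / k ^ 2)
      + ((h₀ - Real.tanh (k * h₀) / k) / k ^ 2)
        * (g + ω ^ 2 / 4 * (h₀ + Real.tanh (k * h₀) / k))
        / (Real.sqrt A + Real.sqrt (g * (Real.tanh (k * h₀) / k)
            + ω ^ 2 / 4 * (Real.tanh (k * h₀) / k) ^ 2))) (𝓝[>] 0) (𝓝 c₂) := by
    have hnum : Tendsto (fun k : ℝ => ((h₀ - Real.tanh (k * h₀) / k) / k ^ 2)
        * (g + ω ^ 2 / 4 * (h₀ + Real.tanh (k * h₀) / k))) (𝓝[>] 0)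
        (𝓝 (h₀ ^ 3 / 3 * (g + ω ^ 2 / 4 * (h₀ + h₀)))) :=
      hu.mul (tendsto_const_nhds.add ((tendsto_const_nhds.add ht).const_mul (ω ^ 2 / 4)))
    have h1 := (hu.const_mul (ω / 2)).add (hnum.div hden (by positivity))
    have h2 : ω / 2 * (h₀ ^ 3 / 3) + h₀ ^ 3 / 3 * (g + ω ^ 2 / 4 * (h₀ + h₀)) / (2 * Real.sqrt A)
        = c₂ := by
      rw [hc₂]
      field_simp
      ring
    rwa [h2] at h1
  refine hG.congr' ?_
  filter_upwards [self_mem_nhdsWithin] with k (hk : 0 < k)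
  have hkh : 0 < k * h₀ := mul_pos hk hh₀
  have htanh : 0 < Real.tanh (k * h₀) := by
    rw [Real.tanh_eq_sinh_div_cosh]
    exact div_pos (by rwa [Real.sinh_pos_iff]) (Real.cosh_pos _)
  set T := Real.tanh (k * h₀) / k with hT_def
  have hT : 0 < T := div_pos htanh hk
  have hBk : (0:ℝ) ≤ g * T + ω ^ 2 / 4 * T ^ 2 := by positivity
  have h1 : Real.sqrt (g * T + ω ^ 2 / 4 * T ^ 2) ^ 2 = g * T + ω ^ 2 / 4 * T ^ 2 :=
    Real.sq_sqrt hBk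
  have h2 : Real.sqrt A ^ 2 = g * h₀ + ω ^ 2 * h₀ ^ 2 / 4 := by
    rw [Real.sq_sqrt hA.le]
  have hD : 0 < Real.sqrt A + Real.sqrt (g * T + ω ^ 2 / 4 * T ^ 2) := by positivity
  have harg : g * Real.tanh (k * h₀) / k + ω ^ 2 / 4 * Real.tanh (k * h₀) ^ 2 / k ^ 2
      = g * T + ω ^ 2 / 4 * T ^ 2 := by
    rw [hT_def]; ring
  have key : Real.sqrt A - Real.sqrt (g * T + ω ^ 2 / 4 * T ^ 2)
      = (h₀ - T) * (g + ω ^ 2 / 4 * (h₀ + T))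
        / (Real.sqrt A + Real.sqrt (g * T + ω ^ 2 / 4 * T ^ 2)) := by
    rw [eq_div_iff hD.ne']
    linear_combination h2 - h1
  have expand : ω * h₀ / 2 + Real.sqrt A - (ω / 2 * T + Real.sqrt (g * T + ω ^ 2 / 4 * T ^ 2))
      = ω / 2 * (h₀ - T) + (h₀ - T) * (g + ω ^ 2 / 4 * (h₀ + T))
        / (Real.sqrt A + Real.sqrt (g * T + ω ^ 2 / 4 * T ^ 2)) := by
    rw [← key]; ring
  rw [hc₀, harg, expand]
  field_simp
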